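/- Let X be a set, (Y,ℱ) a coarse space, and f, g : X → Y maps with induced quantum functions φ_f, φ_g : ℓ∞(Y) → ℓ∞(X) (φ_f(h) = h∘f, φ_g(h) = h∘g). Then f and g are close (i.e., there is F ∈ ℱ with (f(x),g(x)) ∈ F for all x ∈ X) if and only if φ_f and φ_g are quantum close: there is F ∈ ℱ such that (p,q) ∈ R_F for all orthogonal projections p, q ∈ ℓ∞(Y) ⊗̄ B(ℓ²) with (φ_f⊗1)(p)·(φ_g⊗1)(q) ≠ 0. -/

import Mathlib

open scoped ENNReal Classical

noncomputable section

namespace QCG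

/-- A (classical) coarse structure on a set `X`. -/
structure IsCoarseStructure (X : Type*) (ℰ : Set (Set (X × X))) : Prop where
  diagonal_mem : {p : X × X | p.1 = p.2} ∈ ℰ
  subset_mem : ∀ E ∈ ℰ, ∀ F : Set (X × X), F ⊆ E → F ∈ ℰ
  inv_mem : ∀ E ∈ ℰ, {p : X × X | (p.2, p.1) ∈ E} ∈ ℰ
  union_mem : ∀ E ∈ ℰ, ∀ F ∈ ℰ, E ∪ F ∈ ℰ
  comp_mem : ∀ E ∈ ℰ, ∀ F ∈ ℰ, {p : X × X | ∃ z : X, (p.1, z) ∈ E ∧ (z, p.2) ∈ F} ∈ ℰ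

/-- `ℓ²(X × ℕ)`, on which `ℓ∞(X) ⊗̄ B(ℓ²)` is realized. -/
abbrev ltwoXN (X : Type*) : Type _ := lp (fun _ : X × ℕ => ℂ) 2

/-- The standard unit vector `δ_(x,n) ∈ ℓ²(X × ℕ)`. -/
def deltaXN {X : Type*} (z : X × ℕ) : ltwoXN X := lp.single 2 z 1

/-- `b` belongs to `ℓ∞(X) ⊗̄ B(ℓ²)`: it acts blockwise, i.e. its matrix entries between
different `X`-blocks vanish. -/
def Blockwise {X : Type*} (b : ltwoXN X →L[ℂ] ltwoXN X) : Prop :=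
  ∀ x y : X, x ≠ y → ∀ m n : ℕ,
    (inner ℂ (b (deltaXN (y, m))) (deltaXN (x, n)) : ℂ) = 0

/-- An orthogonal projection in `ℓ∞(X) ⊗̄ B(ℓ²)`. -/
def IsBlkProj {X : Type*} (p : ltwoXN X →L[ℂ] ltwoXN X) : Prop :=
  Blockwise p ∧ IsIdempotentElem p ∧ IsSelfAdjoint p

/-- `e x y = e_{xy} ⊗ 1`: the operator sending `δ_(y,n)` to `δ_(x,n)` for every `n`
and vanishing on `δ_(z,n)` for `z ≠ y`. -/
def IsMatUnits {X : Type*} (e : X → X → (ltwoXN X →L[ℂ] ltwoXN X)) : Prop :=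
  ∀ (x y z : X) (n : ℕ),
    e x y (deltaXN (z, n)) = if z = y then deltaXN (x, n) else 0

/-- The intrinsic quantum relation `R_E` associated to a relation `E ⊆ X × X`:
`(p, q) ∈ R_E` iff `p (e_{xy} ⊗ 1) q ≠ 0` for some `(x, y) ∈ E`. -/
def RelE {X : Type*} (e : X → X → (ltwoXN X →L[ℂ] ltwoXN X)) (E : Set (X × X))
    (p q : ltwoXN X →L[ℂ] ltwoXN X) : Prop :=
  ∃ w ∈ E, p * e w.1 w.2 * q ≠ 0

/-- `Φ` is the amplification `φ_f ⊗ 1 : ℓ∞(Y) ⊗̄ B(ℓ²) → ℓ∞(X) ⊗̄ B(ℓ²)` of the quantum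
function `φ_f : ℓ∞(Y) → ℓ∞(X)` induced by `f : X → Y`; it sends `(b_y)_{y ∈ Y}` to
`(b_{f x})_{x ∈ X}`, which is encoded by its matrix entries. -/
def IsAmplifiedPullback {X Y : Type*} (f : X → Y)
    (Φ : (ltwoXN Y →L[ℂ] ltwoXN Y) → (ltwoXN X →L[ℂ] ltwoXN X)) : Prop :=
  ∀ b : ltwoXN Y →L[ℂ] ltwoXN Y, Blockwise b →
    ∀ (x x' : X) (m n : ℕ),
      (inner ℂ (Φ b (deltaXN (x', m))) (deltaXN (x, n)) : ℂ) =
        if x = x' then (inner ℂ (b (deltaXN (f x', m))) (deltaXN (f x', n)) : ℂ) else 0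

section Helpers

variable {X : Type*}

lemma delta_inner_left (i : X × ℕ) (v : ltwoXN X) :
    (inner ℂ (deltaXN i) v : ℂ) = v i := by
  simpa [RCLike.inner_apply, deltaXN] using lp.inner_single_left (𝕜 := ℂ) i (1 : ℂ) v

lemma delta_inner_right (v : ltwoXN X) (i : X × ℕ) :
    (inner ℂ v (deltaXN i) : ℂ) = (starRingEnd ℂ) (v i) := by
  simpa [RCLike.inner_apply, deltaXN] using lp.inner_single_right (𝕜 := ℂ) i (1 : ℂ) v

lemma inner_delta_delta (i j : X × ℕ) :
    (inner ℂ (deltaXN i) (deltaXN j) : ℂ) = if i = j then 1 else 0 := by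
  rw [delta_inner_left]
  by_cases h : i = j
  · subst h; simp [deltaXN, lp.single_apply_self]
  · simp [h, deltaXN, lp.single_apply_ne 2 j 1 h]

lemma vec_ext {v w : ltwoXN X}
    (h : ∀ i, (inner ℂ (deltaXN i) v : ℂ) = (inner ℂ (deltaXN i) w : ℂ)) : v = w := by
  apply lp.ext
  funext i
  have := h i
  rwa [delta_inner_left, delta_inner_left] at this

lemma hasSum_apply_delta (A : ltwoXN X →L[ℂ] ltwoXN X) (v : ltwoXN X) :
    HasSum (fun i => v i • A (deltaXN i)) (A v) := by
  have h := lp.hasSum_single (E := fun _ : X × ℕ => ℂ) ENNReal.ofNat_ne_top v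
  have h2 : HasSum (fun i => (v i : ℂ) • deltaXN i) v := by
    refine h.congr_fun fun i => ?_
    rw [deltaXN, ← lp.single_smul, smul_eq_mul, mul_one]
  exact (h2.mapL A).congr_fun fun i => by rw [map_smul]

lemma clm_ext_delta {A B : ltwoXN X →L[ℂ] ltwoXN X}
    (h : ∀ i, A (deltaXN i) = B (deltaXN i)) : A = B := by
  refine ContinuousLinearMap.ext fun v => ?_
  exact (hasSum_apply_delta A v).unique
    ((hasSum_apply_delta B v).congr_fun fun i => by rw [h i])

lemma eq_zero_of_entries {A : ltwoXN X →L[ℂ] ltwoXN X}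
    (h : ∀ i j, (inner ℂ (A (deltaXN i)) (deltaXN j) : ℂ) = 0) : A = 0 := by
  apply clm_ext_delta
  intro i
  simp only [ContinuousLinearMap.zero_apply]
  apply vec_ext
  intro j
  rw [inner_zero_right, ← inner_conj_symm, h i j, map_zero]

lemma hasSum_inner_delta (A : ltwoXN X →L[ℂ] ltwoXN X) (v : ltwoXN X) (j : X × ℕ) :
    HasSum (fun i => v i * (inner ℂ (deltaXN j) (A (deltaXN i)) : ℂ))
      (inner ℂ (deltaXN j) (A v) : ℂ) := by
  have h := (hasSum_apply_delta A v).mapL (innerSL ℂ (deltaXN j))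
  exact h.congr_fun fun i => by simp [inner_smul_right]

lemma blkproj_matunit {Y : Type*} {eY : Y → Y → (ltwoXN Y →L[ℂ] ltwoXN Y)}
    (heY : IsMatUnits eY) (y : Y) : IsBlkProj (eY y y) := by
  refine ⟨?_, ?_, ?_⟩
  · intro a b hab m n
    rw [heY]
    split_ifs with h
    · subst h
      rw [inner_delta_delta]
      simp [Prod.ext_iff, Ne.symm hab]
    · simp
  · apply clm_ext_delta
    rintro ⟨z, k⟩
    rw [ContinuousLinearMap.mul_apply, heY]
    split_ifs with h
    · rw [heY]; simp
    · simp
  · rw [ContinuousLinearMap.isSelfAdjoint_iff']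
    apply clm_ext_delta
    rintro ⟨a, m⟩
    apply vec_ext
    rintro ⟨b, n⟩
    rw [ContinuousLinearMap.adjoint_inner_right, heY, heY]
    split_ifs with h1 h2 h2
    · subst h1; subst h2
      simp [inner_delta_delta]
    · rw [inner_zero_right, inner_delta_delta]
      simp [Prod.ext_iff, Ne.symm h2]
    · rw [inner_zero_left, inner_delta_delta]
      simp [Prod.ext_iff, h1]
    · simp

lemma prod_entry {X Y : Type*} {f g : X → Y}
    {eY : Y → Y → (ltwoXN Y →L[ℂ] ltwoXN Y)} (heY : IsMatUnits eY)
    {Φf Φg : (ltwoXN Y →L[ℂ] ltwoXN Y) → (ltwoXN X →L[ℂ] ltwoXN X)}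
    (hΦf : IsAmplifiedPullback f Φf) (hΦg : IsAmplifiedPullback g Φg)
    {p q : ltwoXN Y →L[ℂ] ltwoXN Y} (hp : Blockwise p) (hq : Blockwise q)
    (x x' : X) (m n : ℕ) :
    (inner ℂ ((Φf p * Φg q) (deltaXN (x', m))) (deltaXN (x, n)) : ℂ) =
      if x = x' then
        (inner ℂ ((p * eY (f x) (g x) * q) (deltaXN (g x, m))) (deltaXN (f x, n)) : ℂ)
      else 0 := by
  classical
  -- v = Φg q δ_(x',m)
  have hvcoord : ∀ z k, ((Φg q (deltaXN (x', m))) (z, k) : ℂ) =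
      if z = x' then
        (starRingEnd ℂ) (inner ℂ (q (deltaXN (g x', m))) (deltaXN (g x', k)) : ℂ)
      else 0 := by
    intro z k
    have h2 := delta_inner_right (Φg q (deltaXN (x', m))) (z, k)
    have h3 : ((Φg q (deltaXN (x', m))) (z, k) : ℂ) =
        (starRingEnd ℂ) (inner ℂ (Φg q (deltaXN (x', m))) (deltaXN (z, k)) : ℂ) := by
      rw [h2, Complex.conj_conj]
    rw [h3, hΦg q hq z x' m k]
    split_ifs <;> simp
  have hFf : ∀ z k, (inner ℂ (deltaXN (x, n)) (Φf p (deltaXN (z, k))) : ℂ) =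
      if x = z then
        (starRingEnd ℂ) (inner ℂ (p (deltaXN (f z, k))) (deltaXN (f z, n)) : ℂ)
      else 0 := by
    intro z k
    rw [← inner_conj_symm, hΦf p hp x z k n]
    split_ifs <;> simp
  have S1 := hasSum_inner_delta (Φf p) (Φg q (deltaXN (x', m))) (x, n)
  by_cases hxx : x = x'
  · subst hxx
    -- the common ℕ-indexed summand
    set t : ℕ → ℂ := fun k =>
      (starRingEnd ℂ) (inner ℂ (q (deltaXN (g x, m))) (deltaXN (g x, k)) : ℂ) *
      (starRingEnd ℂ) (inner ℂ (p (deltaXN (f x, k))) (deltaXN (f x, n)) : ℂ) with ht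
    have hinj1 : Function.Injective (fun k : ℕ => ((x, k) : X × ℕ)) := by
      intro a b h; simpa using h
    have hsupp1 : ∀ i ∉ Set.range (fun k : ℕ => ((x, k) : X × ℕ)),
        (Φg q (deltaXN (x, m))) i *
          (inner ℂ (deltaXN (x, n)) (Φf p (deltaXN i)) : ℂ) = 0 := by
      rintro ⟨z, k⟩ hi
      have hz : ¬ x = z := by
        rintro rfl; exact hi ⟨k, rfl⟩
      rw [hFf z k, if_neg hz, mul_zero]
    have S1' := (hinj1.hasSum_iff hsupp1).2 S1
    have ht1 : HasSum t (inner ℂ (deltaXN (x, n)) (Φf p (Φg q (deltaXN (x, m)))) : ℂ) := by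
      refine S1'.congr_fun fun k => ?_
      rw [ht]
      simp only [Function.comp_apply]
      rw [hvcoord x k, if_pos rfl, hFf x k, if_pos rfl]
    -- second operator
    have hwcoord : ∀ z k, ((q (deltaXN (g x, m))) (z, k) : ℂ) =
        if z = g x then
          (starRingEnd ℂ) (inner ℂ (q (deltaXN (g x, m))) (deltaXN (g x, k)) : ℂ)
        else 0 := by
      intro z k
      have h2 := delta_inner_right (q (deltaXN (g x, m))) (z, k)
      have h3 : ((q (deltaXN (g x, m))) (z, k) : ℂ) =
          (starRingEnd ℂ) (inner ℂ (q (deltaXN (g x, m))) (deltaXN (z, k)) : ℂ) := by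
        rw [h2, Complex.conj_conj]
      by_cases hz : z = g x
      · subst hz; rw [h3, if_pos rfl]
      · rw [h3, hq z (g x) hz m k, if_neg hz, map_zero]
    have hA2 : ∀ z k,
        (inner ℂ (deltaXN (f x, n)) ((p.comp (eY (f x) (g x))) (deltaXN (z, k))) : ℂ) =
        if z = g x then
          (starRingEnd ℂ) (inner ℂ (p (deltaXN (f x, k))) (deltaXN (f x, n)) : ℂ)
        else 0 := by
      intro z k
      rw [ContinuousLinearMap.comp_apply, heY]
      split_ifs with h
      · rw [← inner_conj_symm]
      · rw [map_zero, inner_zero_right]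
    have S2 := hasSum_inner_delta (p.comp (eY (f x) (g x))) (q (deltaXN (g x, m))) (f x, n)
    have hinj2 : Function.Injective (fun k : ℕ => ((g x, k) : Y × ℕ)) := by
      intro a b h; simpa using h
    have hsupp2 : ∀ j ∉ Set.range (fun k : ℕ => ((g x, k) : Y × ℕ)),
        (q (deltaXN (g x, m))) j *
          (inner ℂ (deltaXN (f x, n)) ((p.comp (eY (f x) (g x))) (deltaXN j)) : ℂ) = 0 := by
      rintro ⟨z, k⟩ hj
      have hz : ¬ z = g x := by
        rintro rfl; exact hj ⟨k, rfl⟩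
      rw [hwcoord z k, if_neg hz, zero_mul]
    have S2' := (hinj2.hasSum_iff hsupp2).2 S2
    have ht2 : HasSum t
        (inner ℂ (deltaXN (f x, n))
          ((p.comp (eY (f x) (g x))) (q (deltaXN (g x, m)))) : ℂ) := by
      refine S2'.congr_fun fun k => ?_
      rw [ht]
      simp only [Function.comp_apply]
      rw [hwcoord (g x) k, if_pos rfl, hA2 (g x) k, if_pos rfl]
    have hs := ht1.unique ht2
    have hmul : ((p * eY (f x) (g x) * q) (deltaXN (g x, m)))
        = (p.comp (eY (f x) (g x))) (q (deltaXN (g x, m))) := by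
      rw [ContinuousLinearMap.mul_apply, ContinuousLinearMap.mul_apply,
        ContinuousLinearMap.comp_apply]
    rw [if_pos rfl, ContinuousLinearMap.mul_apply, ← inner_conj_symm, hs, hmul,
      inner_conj_symm]
  · rw [if_neg hxx, ContinuousLinearMap.mul_apply, ← inner_conj_symm]
    have hzero : (inner ℂ (deltaXN (x, n)) (Φf p (Φg q (deltaXN (x', m)))) : ℂ) = 0 := by
      have h0 : HasSum (fun _ : X × ℕ => (0 : ℂ))
          (inner ℂ (deltaXN (x, n)) (Φf p (Φg q (deltaXN (x', m)))) : ℂ) := by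
        refine S1.congr_fun ?_
        rintro ⟨z, k⟩
        by_cases hz : z = x'
        · rw [hFf z k, if_neg (fun h => hxx (h.trans hz)), mul_zero]
        · rw [hvcoord z k, if_neg hz, zero_mul]
      exact h0.unique hasSum_zero
    rw [hzero, map_zero]

end Helpers

/-- Maps `f, g : X → Y` into a coarse space `(Y, ℱ)` are close if and only if the induced
quantum functions `φ_f, φ_g : ℓ∞(Y) → ℓ∞(X)` are quantum close: there is `F ∈ ℱ` with
`(p, q) ∈ R_F` for all projections `p, q ∈ ℓ∞(Y) ⊗̄ B(ℓ²)` with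
`(φ_f ⊗ 1)(p) · (φ_g ⊗ 1)(q) ≠ 0`. -/
theorem statement18 {X Y : Type*} (ℱ : Set (Set (Y × Y)))
    (hℱ : IsCoarseStructure Y ℱ) (f g : X → Y)
    (eY : Y → Y → (ltwoXN Y →L[ℂ] ltwoXN Y)) (heY : IsMatUnits eY)
    (Φf : (ltwoXN Y →L[ℂ] ltwoXN Y) → (ltwoXN X →L[ℂ] ltwoXN X))
    (hΦf : IsAmplifiedPullback f Φf)
    (Φg : (ltwoXN Y →L[ℂ] ltwoXN Y) → (ltwoXN X →L[ℂ] ltwoXN X))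
    (hΦg : IsAmplifiedPullback g Φg) :
    (∃ F ∈ ℱ, ∀ x : X, (f x, g x) ∈ F) ↔
      (∃ F ∈ ℱ, ∀ p q : ltwoXN Y →L[ℂ] ltwoXN Y, IsBlkProj p → IsBlkProj q →
        Φf p * Φg q ≠ 0 → RelE eY F p q) := by
  constructor
  · rintro ⟨F, hF, hcl⟩
    refine ⟨F, hF, fun p q hp hq hne => ?_⟩
    by_contra hrel
    apply hne
    apply eq_zero_of_entries
    rintro ⟨x', m⟩ ⟨x, n⟩
    rw [prod_entry heY hΦf hΦg hp.1 hq.1 x x' m n]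
    split_ifs with h
    · have h0 : p * eY (f x) (g x) * q = 0 := by
        by_contra h1
        exact hrel ⟨(f x, g x), hcl x, h1⟩
      rw [h0]
      simp
    · rfl
  · rintro ⟨F, hF, hQ⟩
    refine ⟨F, hF, fun x => ?_⟩
    have hp := blkproj_matunit heY (f x)
    have hq := blkproj_matunit heY (g x)
    have hqδ : eY (g x) (g x) (deltaXN (g x, 0)) = deltaXN (g x, 0) := by
      rw [heY]; simp
    have hpδ : eY (f x) (f x) (deltaXN (f x, 0)) = deltaXN (f x, 0) := by
      rw [heY]; simp
    have hΦgδ : Φg (eY (g x) (g x)) (deltaXN (x, 0)) = deltaXN (x, 0) := by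
      apply vec_ext
      rintro ⟨z, k⟩
      rw [← inner_conj_symm, hΦg _ hq.1 z x 0 k]
      by_cases hz : z = x
      · subst hz
        rw [if_pos rfl, hqδ, inner_delta_delta, delta_inner_left]
        by_cases hk : k = 0
        · subst hk; simp [deltaXN, lp.single_apply_self]
        · rw [if_neg (show ¬((g z, 0) : Y × ℕ) = (g z, k) from
              fun h => hk ((Prod.mk.inj h).2).symm), map_zero]
          simp only [deltaXN]
          rw [lp.single_apply_ne 2 (z, 0) 1
              (show ((z, k) : X × ℕ) ≠ (z, 0) from fun h => hk (Prod.mk.inj h).2)]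
      · rw [if_neg hz, map_zero, delta_inner_left, deltaXN,
          lp.single_apply_ne 2 (x, 0) 1 (by simp [Prod.ext_iff, hz])]
    have hΦfδ : Φf (eY (f x) (f x)) (deltaXN (x, 0)) = deltaXN (x, 0) := by
      apply vec_ext
      rintro ⟨z, k⟩
      rw [← inner_conj_symm, hΦf _ hp.1 z x 0 k]
      by_cases hz : z = x
      · subst hz
        rw [if_pos rfl, hpδ, inner_delta_delta, delta_inner_left]
        by_cases hk : k = 0
        · subst hk; simp [deltaXN, lp.single_apply_self]
        · rw [if_neg (show ¬((f z, 0) : Y × ℕ) = (f z, k) from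
              fun h => hk ((Prod.mk.inj h).2).symm), map_zero]
          simp only [deltaXN]
          rw [lp.single_apply_ne 2 (z, 0) 1
              (show ((z, k) : X × ℕ) ≠ (z, 0) from fun h => hk (Prod.mk.inj h).2)]
      · rw [if_neg hz, map_zero, delta_inner_left, deltaXN,
          lp.single_apply_ne 2 (x, 0) 1 (by simp [Prod.ext_iff, hz])]
    have hne : Φf (eY (f x) (f x)) * Φg (eY (g x) (g x)) ≠ 0 := by
      intro h0
      have h1 : (Φf (eY (f x) (f x)) * Φg (eY (g x) (g x))) (deltaXN (x, 0)) = 0 := by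
        rw [h0]; rfl
      rw [ContinuousLinearMap.mul_apply, hΦgδ, hΦfδ] at h1
      have h2 := congrArg (fun v : ltwoXN X => (v (x, 0) : ℂ)) h1
      simp [deltaXN, lp.single_apply_self] at h2
    obtain ⟨w, hwF, hw⟩ := hQ _ _ hp hq hne
    have hweq : w = (f x, g x) := by
      by_contra hne2
      apply hw
      apply clm_ext_delta (B := 0)
      rintro ⟨z, k⟩
      rw [ContinuousLinearMap.mul_apply, ContinuousLinearMap.mul_apply,
        ContinuousLinearMap.zero_apply, heY]
      split_ifs with h1
      · rw [heY]
        split_ifs with h2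
        · rw [heY]
          split_ifs with h3
          · exact absurd (Prod.ext h3 h2.symm) hne2
          · rfl
        · simp
      · simp
    exact hweq ▸ hwF


end QCG
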